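/- Let G be a finite simple graph on vertex set V, and suppose that for each vertex w of V there is given a set e_w of at most one unordered pair of distinct neighbors of w in G. Let G' be the graph on V whose edge set is the edge set of G together with all the pairs e_w. Then for every vertex u, the degree of u in G' is at most twice the degree of u in G. -/

import Mathlib

open scoped Classical

noncomputable section

variable {V : Type} [Fintype V] [DecidableEq V]

/-- The neighbors of `v` in `G`, as a `Finset`. -/
def nbr (G : SimpleGraph V) (v : V) : Finset V := Finset.univ.filter (fun w => G.Adj v w)

/-- The degree `d(v)` of `v` in `G`. -/
def deg (G : SimpleGraph V) (v : V) : ℕ := (nbr G v).card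

/-- `Nk G u i` is the set `Nⁱ(u)` of vertices at graph distance exactly `i` from `u`. -/
def Nk (G : SimpleGraph V) (u : V) (i : ℕ) : Finset V :=
  Finset.univ.filter (fun v => v ≠ u ∧ G.dist u v = i)

/-- `degIn G v S` is `d(v, S)`, the number of neighbors of `v` lying in `S`. -/
def degIn (G : SimpleGraph V) (v : V) (S : Finset V) : ℕ := (nbr G v ∩ S).card

end

/-- Let `G` be a finite simple graph on a vertex set `V` and suppose
that for each vertex `w` there is given a set `e w` of at most one unordered pair of
distinct neighbors of `w` in `G` (realized as an `Option (Sym2 V)`).  Let `G'` be the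
graph on `V` whose edge set is that of `G` together with all the pairs `e w`.  Then the
degree of every vertex in `G'` is at most twice its degree in `G`.  (This captures one
round of the triangulation process.) -/
theorem degree_after_one_round_le_two_mul
    {V : Type} [Fintype V] [DecidableEq V] (G : SimpleGraph V)
    (e : V → Option (Sym2 V))
    (he : ∀ w p, e w = some p → ¬ p.IsDiag ∧ ∀ a ∈ p, G.Adj w a)
    (G' : SimpleGraph V)
    (hG' : G' = G ⊔ SimpleGraph.fromEdgeSet {p | ∃ w, e w = some p})
    (u : V) :
    deg G' u ≤ 2 * deg G u := by
  classical
  subst hG'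
  set A : Finset V := nbr (G ⊔ SimpleGraph.fromEdgeSet {p | ∃ w, e w = some p}) u \ nbr G u with hA
  have hsub : nbr (G ⊔ SimpleGraph.fromEdgeSet {p | ∃ w, e w = some p}) u ⊆ nbr G u ∪ A := by
    intro v hv
    by_cases h : v ∈ nbr G u
    · exact Finset.mem_union_left _ h
    · exact Finset.mem_union_right _ (Finset.mem_sdiff.mpr ⟨hv, h⟩)
  have hAw : ∀ v ∈ A, ∃ w, e w = some s(u, v) := by
    intro v hv
    rw [hA, Finset.mem_sdiff] at hv
    obtain ⟨hv1, hv2⟩ := hv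
    simp only [nbr, Finset.mem_filter, Finset.mem_univ, true_and, SimpleGraph.sup_adj] at hv1 hv2
    rcases hv1 with h | h
    · exact absurd h hv2
    · rw [SimpleGraph.fromEdgeSet_adj] at h
      exact h.1
  have hAcard : A.card ≤ (nbr G u).card := by
    apply Finset.card_le_card_of_injOn
      (fun v => if hv : v ∈ A then (hAw v hv).choose else u)
    · intro v hv
      simp only [Finset.mem_coe] at hv
      simp only [hv, dif_pos]
      have hw := (hAw v hv).choose_spec
      have := (he _ _ hw).2 u (by simp)
      exact Finset.mem_filter.mpr ⟨Finset.mem_univ _, this.symm⟩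
    · intro v1 hv1 v2 hv2 heq
      simp only [Finset.mem_coe] at hv1 hv2
      simp only [hv1, hv2, dif_pos] at heq
      have h1 := (hAw v1 hv1).choose_spec
      have h2 := (hAw v2 hv2).choose_spec
      rw [heq, h2] at h1
      exact (Sym2.congr_right.mp (Option.some.inj h1)).symm
  calc (nbr (G ⊔ SimpleGraph.fromEdgeSet {p | ∃ w, e w = some p}) u).card
      ≤ (nbr G u ∪ A).card := Finset.card_le_card hsub
    _ ≤ (nbr G u).card + A.card := Finset.card_union_le _ _
    _ ≤ (nbr G u).card + (nbr G u).card := by omega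
    _ = 2 * deg G u := by rw [deg]; ring
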